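/- Let (b_1,…,b_t) be a chain of class T_0 generated from [4], and suppose b_j = 2 for all j > i with b_i ≥ 3 and i ≥ 2 (so b_1 = t − i + 2). Then the chain obtained by the generating operations from the shortened data, namely (b_1 − (t−i), b_2, …, b_{i−1}, b_i), that is (2, b_2, …, b_i), is again a chain of class T_0. -/

import Mathlib

/-- Hirzebruch–Jung continued fraction of a list: `hj [b₁,…,bᵣ] = b₁ - 1/hj [b₂,…,bᵣ]`. -/
def hj : List ℚ → ℚ
  | [] => 0
  | [b] => b
  | b :: l => b - 1 / hj l


/-- Chains of class T₀ generated from [4] by the two KSB operations. -/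
inductive GenT0 : List ℤ → Prop
  | base : GenT0 [4]
  | left (l : List ℤ) (h : l ≠ []) : GenT0 l →
      GenT0 (2 :: (l.dropLast ++ [l.getLast h + 1]))
  | right (l : List ℤ) (h : l ≠ []) : GenT0 l →
      GenT0 ((l.head h + 1) :: (l.tail ++ [2]))

lemma GenT0.two_le {l : List ℤ} (h : GenT0 l) : ∀ x ∈ l, 2 ≤ x := by
  induction h with
  | base => intro x hx; simp at hx; omega
  | left m hm hg ih =>
    intro x hx
    simp only [List.mem_cons, List.mem_append, List.mem_singleton] at hx
    rcases hx with rfl | h | rfl | h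
    · norm_num
    · exact ih _ (List.mem_of_mem_dropLast h)
    · have := ih _ (List.getLast_mem hm); omega
    · simp at h
  | right m hm hg ih =>
    intro x hx
    simp only [List.mem_cons, List.mem_append, List.mem_singleton] at hx
    rcases hx with rfl | h | rfl | h
    · have := ih _ (List.head_mem hm); omega
    · exact ih _ (List.tail_subset m h)
    · norm_num
    · simp at h

theorem stmt_19 (l : List ℤ) (h : GenT0 l) (k : ℕ)
    (hk1 : 1 ≤ k) (hk2 : k < l.length)
    (hbi : 3 ≤ l[k]!) (h2 : ∀ j, k < j → j < l.length → l[j]! = 2) :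
    GenT0 ((l[0]! - ((l.length - 1 - k : ℕ) : ℤ)) :: (l.tail.take k)) := by
  induction h generalizing k with
  | base => simp at hk2; omega
  | left m hm hg ih =>
    clear ih
    have hml : 1 ≤ m.length := List.length_pos_iff.mpr hm
    have hlen : (2 :: (m.dropLast ++ [m.getLast hm + 1])).length = m.length + 1 := by
      simp [List.length_dropLast] <;> omega
    rw [hlen] at hk2 h2
    by_cases hc : k = m.length
    · subst hc
      have h0 : ((2:ℤ) :: (m.dropLast ++ [m.getLast hm + 1]))[0]! = 2 :=
        List.getElem!_cons_zero
      have ht : ((2 : ℤ) :: (m.dropLast ++ [m.getLast hm + 1])).tail.take m.length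
          = m.dropLast ++ [m.getLast hm + 1] := by
        apply List.take_of_length_le
        simp [List.length_dropLast] <;> omega
      rw [hlen, h0, ht]
      simp only [Nat.add_sub_cancel, Nat.sub_self, Nat.cast_zero, sub_zero]
      exact GenT0.left m hm hg
    · exfalso
      have h3 := h2 m.length (by omega) (by omega)
      have : (2 :: (m.dropLast ++ [m.getLast hm + 1]))[m.length]!
          = (m.dropLast ++ [m.getLast hm + 1])[m.length - 1]! := by
        obtain ⟨n, hn⟩ : ∃ n, m.length = n + 1 := ⟨m.length - 1, by omega⟩
        rw [hn]; simp [List.getElem!_cons_succ]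
      rw [this] at h3
      have hv : (m.dropLast ++ [m.getLast hm + 1])[m.length - 1]! = m.getLast hm + 1 := by
        rw [getElem!_pos _ _ (by simp [List.length_dropLast] <;> omega)]
        rw [List.getElem_append_right (by simp [List.length_dropLast])]
        simp [List.length_dropLast]
      rw [hv] at h3
      have := hg.two_le _ (List.getLast_mem hm)
      omega
  | right m hm hg ih =>
    have hml : 1 ≤ m.length := List.length_pos_iff.mpr hm
    have hlen : ((m.head hm + 1) :: (m.tail ++ [2])).length = m.length + 1 := by
      simp [List.length_tail] <;> omega
    rw [hlen] at hk2 h2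
    -- get index facts
    have hidx : ∀ j, 1 ≤ j → j < m.length →
        ((m.head hm + 1) :: (m.tail ++ [2]))[j]! = m[j]! := by
      intro j h1 hj
      obtain ⟨n, hn⟩ : ∃ n, j = n + 1 := ⟨j - 1, by omega⟩
      subst hn
      rw [List.getElem!_cons_succ]
      rw [getElem!_pos _ _ (by simp [List.length_tail] <;> omega)]
      rw [List.getElem_append_left (by simp [List.length_tail] <;> omega)]
      rw [getElem!_pos _ _ (by omega)]
      rw [List.getElem_tail]
    have hkm : k < m.length := by
      by_contra hc
      have hk' : k = m.length := by omega
      have : ((m.head hm + 1) :: (m.tail ++ [2]))[k]! = 2 := by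
        rw [hk']
        obtain ⟨n, hn⟩ : ∃ n, m.length = n + 1 := ⟨m.length - 1, by omega⟩
        rw [hn, List.getElem!_cons_succ]
        rw [getElem!_pos _ _ (by simp [List.length_tail] <;> omega)]
        rw [List.getElem_append_right (by simp [List.length_tail] <;> omega)]
        simp [List.length_tail] <;> omega
      omega
    have hbi' : 3 ≤ m[k]! := by rw [← hidx k hk1 hkm]; exact hbi
    have h2' : ∀ j, k < j → j < m.length → m[j]! = 2 := by
      intro j hj1 hj2
      rw [← hidx j (by omega) hj2]
      exact h2 j hj1 (by omega)
    have hres := ih k hk1 hkm hbi' h2'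
    have h0 : ((m.head hm + 1) :: (m.tail ++ [2]))[0]! = m[0]! + 1 := by
      rw [List.getElem!_cons_zero, getElem!_pos _ _ (by omega), ← List.head_eq_getElem hm]
    have htk : ((m.head hm + 1) :: (m.tail ++ [2])).tail.take k = m.tail.take k := by
      simp only [List.tail_cons]
      exact List.take_append_of_le_length (by simp [List.length_tail] <;> omega)
    rw [hlen, h0, htk]
    convert hres using 2
    omega
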